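/- There exist a constant c > 1 and a natural number N₀ such that for every N ≥ N₀ there is a nonzero real polynomial p of degree at most N − 1 with max_{1 ≤ j ≤ N} |p(x_j)| > 0 and sup_{x ∈ [−1,1]} |p(x)| ≥ c^N · max_{1 ≤ j ≤ N} |p(x_j)|, where x_j = −1 + 2(j − 1)/(N − 1), j = 1, …, N, are the N equidistant points in [−1, 1]. -/

import Mathlib

open Finset Polynomial

section EqNodesAux

lemma eqnodes_aux_pow (n : ℕ) (hn : 25 ≤ n) : 8 * n ^ 3 * 3 ^ n ≤ 5 ^ n := by
  induction n with
  | zero => omega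
  | succ k ih =>
    rcases Nat.lt_or_ge k 25 with h | h
    · have hk : k = 24 := by omega
      subst hk; norm_num
    · have ihk := ih h
      have hk6 : 3 * (k + 1) ^ 3 ≤ 5 * k ^ 3 := by nlinarith [Nat.mul_le_mul_right (k*k) h, Nat.mul_le_mul_right k h]
      calc 8 * (k + 1) ^ 3 * 3 ^ (k + 1)
          = 3 * (k + 1) ^ 3 * (8 * 3 ^ k) := by ring
        _ ≤ 5 * k ^ 3 * (8 * 3 ^ k) := Nat.mul_le_mul_right _ hk6
        _ = 5 * (8 * k ^ 3 * 3 ^ k) := by ring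
        _ ≤ 5 * 5 ^ k := Nat.mul_le_mul_left _ ihk
        _ = 5 ^ (k + 1) := by ring

-- odd product
lemma eqnodes_oddprod (n : ℕ) :
    (∏ k ∈ Finset.Ico 1 (n + 1), (2 * k - 1)) * (2 ^ n * n.factorial)
      = (2 * n).factorial := by
  induction n with
  | zero => simp
  | succ k ih =>
    rw [Finset.prod_Ico_succ_top (by omega)]
    have h1 : 2 * (k + 1) - 1 = 2 * k + 1 := by omega
    have h2 : 2 * (k + 1) = (2 * k + 1) + 1 := by ring
    rw [h1, h2, Nat.factorial_succ, Nat.factorial_succ, Nat.factorial_succ, ← ih]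
    ring

lemma eqnodes_distprod (n m : ℕ) (hm : m ≤ n) :
    ∏ k ∈ (Finset.range (n + 1)).erase m, |(m : ℝ) - (k : ℝ)| =
      ((m.factorial * (n - m).factorial : ℕ) : ℝ) := by
  have hset : (Finset.range (n + 1)).erase m
      = Finset.range m ∪ Finset.Ico (m + 1) (n + 1) := by
    ext k
    simp only [Finset.mem_erase, Finset.mem_range, Finset.mem_union, Finset.mem_Ico]
    omega
  have hdisj : Disjoint (Finset.range m) (Finset.Ico (m + 1) (n + 1)) := by
    simp only [Finset.disjoint_left, Finset.mem_range, Finset.mem_Ico]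
    omega
  have N1 : ∏ k ∈ Finset.range m, (m - k) = m.factorial := by
    rw [← Finset.prod_range_add_one_eq_factorial,
        ← Finset.prod_range_reflect (fun j => j + 1) m]
    exact Finset.prod_congr rfl fun k hk => by
      rw [Finset.mem_range] at hk; omega
  have N2 : ∏ k ∈ Finset.Ico (m + 1) (n + 1), (k - m) = (n - m).factorial := by
    rw [Finset.prod_Ico_eq_prod_range, ← Finset.prod_range_add_one_eq_factorial]
    have he : n + 1 - (m + 1) = n - m := by omega
    rw [he]
    exact Finset.prod_congr rfl fun k _ => by omega
  have C1 : ∏ k ∈ Finset.range m, |(m : ℝ) - (k : ℝ)| = ((m.factorial : ℕ) : ℝ) := by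
    rw [← N1, Nat.cast_prod]
    refine Finset.prod_congr rfl fun k hk => ?_
    rw [Finset.mem_range] at hk
    rw [Nat.cast_sub hk.le, abs_of_nonneg]
    have : (k : ℝ) ≤ (m : ℝ) := by exact_mod_cast hk.le
    linarith
  have C2 : ∏ k ∈ Finset.Ico (m + 1) (n + 1), |(m : ℝ) - (k : ℝ)|
      = (((n - m).factorial : ℕ) : ℝ) := by
    rw [← N2, Nat.cast_prod]
    refine Finset.prod_congr rfl fun k hk => ?_
    rw [Finset.mem_Ico] at hk
    have hk' : m ≤ k := by omega
    rw [Nat.cast_sub hk', abs_sub_comm, abs_of_nonneg]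
    have : (m : ℝ) ≤ (k : ℝ) := by exact_mod_cast hk'
    linarith
  rw [hset, Finset.prod_union hdisj, C1, C2]
  push_cast
  ring

lemma eqnodes_fin_erase_prod (N : ℕ) (m : Fin N) (g : ℕ → ℝ) :
    ∏ k ∈ Finset.univ.erase m, g (k : ℕ)
      = ∏ k ∈ (Finset.range N).erase (m : ℕ), g k := by
  refine Finset.prod_bij (fun (a : Fin N) _ => (a : ℕ)) ?_ ?_ ?_ ?_
  · intro a ha
    rw [Finset.mem_erase] at ha ⊢
    exact ⟨fun h => ha.1 (Fin.ext h), Finset.mem_range.2 a.isLt⟩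
  · intro a _ b _ h
    exact Fin.ext h
  · intro b hb
    rw [Finset.mem_erase, Finset.mem_range] at hb
    exact ⟨⟨b, hb.2⟩, Finset.mem_erase.2 ⟨fun h => hb.1 (by simpa using congrArg Fin.val h), Finset.mem_univ _⟩, rfl⟩
  · intro a _
    rfl

lemma eqnodes_keyineq (n m : ℕ) (hn : 25 ≤ n) (hm : m = n / 2)
    (hpow : 8 * n ^ 3 * 3 ^ n ≤ 5 ^ n) :
    6 ^ (n + 1) * (2 ^ n * (m.factorial * (n - m).factorial))
        * ((2 * m - 1) * (2 ^ n * n.factorial))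
      ≤ 5 ^ (n + 1) * (2 * n).factorial := by
  have hmn : m ≤ n := by omega
  have h1 : 2 ^ n * (m.factorial * (n - m).factorial) ≤ (n + 1) * n.factorial := by
    have hsum : (∑ i ∈ Finset.range (n + 1), n.choose i) = 2 ^ n := Nat.sum_range_choose n
    have hle : ∑ i ∈ Finset.range (n + 1), n.choose i ≤ (n + 1) * n.choose m := by
      have := Finset.sum_le_card_nsmul (Finset.range (n + 1)) n.choose (n.choose m)
        (fun i _ => hm ▸ Nat.choose_le_middle i n)
      simpa [Finset.card_range, smul_eq_mul] using this
    have h2n : 2 ^ n ≤ (n + 1) * n.choose m := hsum ▸ hle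
    calc 2 ^ n * (m.factorial * (n - m).factorial)
        ≤ (n + 1) * n.choose m * (m.factorial * (n - m).factorial) :=
          Nat.mul_le_mul_right _ h2n
      _ = (n + 1) * (n.choose m * m.factorial * (n - m).factorial) := by ring
      _ = (n + 1) * n.factorial := by rw [Nat.choose_mul_factorial_mul_factorial hmn]
  have h2 : 4 ^ n * (n.factorial * n.factorial) ≤ (2 * n) * (2 * n).factorial := by
    have hc : 4 ^ n ≤ 2 * n * n.centralBinom :=
      Nat.four_pow_le_two_mul_self_mul_centralBinom n (by omega)
    have hcb : n.centralBinom * (n.factorial * n.factorial) = (2 * n).factorial := by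
      have := Nat.choose_mul_factorial_mul_factorial (show n ≤ 2 * n by omega)
      rw [Nat.centralBinom_eq_two_mul_choose]
      have hsub : 2 * n - n = n := by omega
      rw [hsub] at this
      rw [← this]; ring
    calc 4 ^ n * (n.factorial * n.factorial)
        ≤ 2 * n * n.centralBinom * (n.factorial * n.factorial) :=
          Nat.mul_le_mul_right _ hc
      _ = 2 * n * (n.centralBinom * (n.factorial * n.factorial)) := by ring
      _ = 2 * n * (2 * n).factorial := by rw [hcb]
  have h6 : (6 : ℕ) ^ n = 2 ^ n * 3 ^ n := by rw [← Nat.mul_pow]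
  have h4 : (4 : ℕ) ^ n = 2 ^ n * 2 ^ n := by rw [← Nat.mul_pow]
  refine Nat.le_of_mul_le_mul_left ?_ (show 0 < 2 ^ n from Nat.pow_pos (by omega))
  calc 2 ^ n * (6 ^ (n + 1) * (2 ^ n * (m.factorial * (n - m).factorial))
          * ((2 * m - 1) * (2 ^ n * n.factorial)))
      = (6 ^ (n + 1) * (2 * m - 1)) * (2 ^ n * 2 ^ n * n.factorial)
          * (2 ^ n * (m.factorial * (n - m).factorial)) := by ring
    _ ≤ (6 ^ (n + 1) * (2 * m - 1)) * (2 ^ n * 2 ^ n * n.factorial)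
          * ((n + 1) * n.factorial) := Nat.mul_le_mul_left _ h1
    _ = (6 ^ (n + 1) * (2 * m - 1) * (n + 1)) * (4 ^ n * (n.factorial * n.factorial)) := by
          rw [h4]; ring
    _ ≤ (6 ^ (n + 1) * (2 * m - 1) * (n + 1)) * ((2 * n) * (2 * n).factorial) :=
          Nat.mul_le_mul_left _ h2
    _ = (6 ^ (n + 1) * (2 * m - 1) * (n + 1) * (2 * n)) * (2 * n).factorial := by ring
    _ ≤ (6 ^ (n + 1) * n * (2 * n) * (2 * n)) * (2 * n).factorial := by
          have hb1 : 2 * m - 1 ≤ n := by omega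
          have hb2 : n + 1 ≤ 2 * n := by omega
          exact Nat.mul_le_mul_right _ (by
            calc 6 ^ (n + 1) * (2 * m - 1) * (n + 1) * (2 * n)
                ≤ 6 ^ (n + 1) * n * (2 * n) * (2 * n) :=
                  Nat.mul_le_mul_right _ (Nat.mul_le_mul (Nat.mul_le_mul_left _ hb1) hb2))
    _ = (2 ^ n * (3 * (8 * n ^ 3 * 3 ^ n))) * (2 * n).factorial := by
          rw [pow_succ, h6]; ring
    _ ≤ (2 ^ n * (3 * 5 ^ n)) * (2 * n).factorial :=
          Nat.mul_le_mul_right _ (Nat.mul_le_mul_left _ (Nat.mul_le_mul_left _ hpow))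
    _ ≤ 2 ^ n * (5 ^ (n + 1) * (2 * n).factorial) := by
          rw [pow_succ]
          calc (2 ^ n * (3 * 5 ^ n)) * (2 * n).factorial
              = 2 ^ n * (3 * (5 ^ n * (2 * n).factorial)) := by ring
            _ ≤ 2 ^ n * (5 * (5 ^ n * (2 * n).factorial)) :=
                Nat.mul_le_mul_left _ (Nat.mul_le_mul_right _ (by omega))
            _ = 2 ^ n * (5 ^ n * 5 * (2 * n).factorial) := by ring

end EqNodesAux

theorem equidistant_nodes_exponential_instability :
    ∃ c : ℝ, 1 < c ∧
      ∃ (N₀ : ℕ) (hN₀ : 2 ≤ N₀),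
        ∀ (N : ℕ) (hN : N₀ ≤ N),
          ∃ p : Polynomial ℝ, p ≠ 0 ∧ p.natDegree ≤ N - 1 ∧
            0 < Finset.univ.sup' ⟨⟨0, by omega⟩, Finset.mem_univ _⟩
                (fun j : Fin N => |p.eval (-1 + 2 * (j : ℝ) / ((N : ℝ) - 1))|) ∧
            ∃ x ∈ Set.Icc (-1 : ℝ) 1,
              c ^ N *
                  Finset.univ.sup' ⟨⟨0, by omega⟩, Finset.mem_univ _⟩
                    (fun j : Fin N => |p.eval (-1 + 2 * (j : ℝ) / ((N : ℝ) - 1))|) ≤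
                |p.eval x| := by
  refine ⟨6 / 5, by norm_num, 26, by norm_num, ?_⟩
  intro N hN
  obtain ⟨n, rfl⟩ : ∃ n, N = n + 1 := ⟨N - 1, by omega⟩
  have hn : 25 ≤ n := by omega
  set m : ℕ := n / 2 with hm
  have hm1 : 1 ≤ m := by omega
  have hmn : m ≤ n := by omega
  have hνpos : (0 : ℝ) < (n : ℝ) := by
    have : 0 < n := by omega
    exact_mod_cast this
  have hν : (((n + 1 : ℕ) : ℝ)) - 1 = (n : ℝ) := by push_cast; ring
  -- the nodes
  set xj : Fin (n + 1) → ℝ :=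
    fun j => -1 + 2 * (j : ℝ) / (((n + 1 : ℕ) : ℝ) - 1) with hxj
  have hxj' : ∀ j : Fin (n + 1), xj j = -1 + 2 * ((j : ℕ) : ℝ) / (n : ℝ) := by
    intro j; rw [hxj]; simp only [hν]
  have hinj : Function.Injective xj := by
    intro a b hab
    rw [hxj' a, hxj' b] at hab
    field_simp at hab
    exact Fin.ext (by push_cast at hab; exact_mod_cast (by linarith : ((a : ℕ) : ℝ) = ((b : ℕ) : ℝ)))
  set mF : Fin (n + 1) := ⟨m, by omega⟩ with hmF
  set p : Polynomial ℝ := ∏ k ∈ Finset.univ.erase mF, (X - C (xj k)) with hp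
  have heval : ∀ y : ℝ, p.eval y = ∏ k ∈ Finset.univ.erase mF, (y - xj k) := by
    intro y; rw [hp, Polynomial.eval_prod]; simp
  have habs : ∀ y : ℝ, |p.eval y| = ∏ k ∈ Finset.univ.erase mF, |y - xj k| := by
    intro y; rw [heval, Finset.abs_prod]
  have hcard : (Finset.univ.erase mF).card = n := by
    rw [Finset.card_erase_of_mem (Finset.mem_univ _), Finset.card_univ, Fintype.card_fin]
    omega
  have hAne : p.eval (xj mF) ≠ 0 := by
    rw [heval]
    refine Finset.prod_ne_zero_iff.2 fun k hk => ?_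
    rw [Finset.mem_erase] at hk
    exact sub_ne_zero.2 fun h => hk.1 (hinj h).symm
  have hp0 : p ≠ 0 := fun h => hAne (by rw [h]; simp)
  have hdeg : p.natDegree ≤ n + 1 - 1 := by
    calc p.natDegree ≤ ∑ k ∈ Finset.univ.erase mF, (X - C (xj k)).natDegree := by
          rw [hp]; exact Polynomial.natDegree_prod_le _ _
      _ = ∑ k ∈ Finset.univ.erase mF, 1 := by
          refine Finset.sum_congr rfl fun k _ => Polynomial.natDegree_X_sub_C _
      _ = n := by rw [Finset.sum_const, hcard, smul_eq_mul, mul_one]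
      _ ≤ n + 1 - 1 := by omega
  have hzero : ∀ j : Fin (n + 1), j ≠ mF → p.eval (xj j) = 0 := by
    intro j hj
    rw [heval]
    exact Finset.prod_eq_zero (Finset.mem_erase.2 ⟨hj, Finset.mem_univ _⟩) (sub_self _)
  -- sup' equals |p.eval (xj mF)|
  have hSval : ∀ (ne : (Finset.univ : Finset (Fin (n + 1))).Nonempty),
      Finset.univ.sup' ne
        (fun j : Fin (n + 1) => |p.eval (-1 + 2 * (j : ℝ) / (((n + 1 : ℕ) : ℝ) - 1))|)
        = |p.eval (xj mF)| := by
    intro ne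
    refine le_antisymm (Finset.sup'_le _ _ fun j _ => ?_)
      (Finset.le_sup' (fun j : Fin (n + 1) =>
        |p.eval (-1 + 2 * (j : ℝ) / (((n + 1 : ℕ) : ℝ) - 1))|) (Finset.mem_univ mF))
    by_cases hj : j = mF
    · subst hj; exact le_refl _
    · have : p.eval (-1 + 2 * (j : ℝ) / (((n + 1 : ℕ) : ℝ) - 1)) = 0 := hzero j hj
      rw [this, abs_zero]
      exact abs_nonneg _
  refine ⟨p, hp0, hdeg, ?_, ?_⟩
  · exact lt_of_lt_of_eq (abs_pos.2 hAne) (hSval _).symm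
  -- main estimate
  · have hν0 : (n : ℝ) ≠ 0 := ne_of_gt hνpos
    have hinv_pos : (0 : ℝ) < 1 / (n : ℝ) := by positivity
    have hinv_le : 1 / (n : ℝ) ≤ 1 := by
      rw [div_le_one hνpos]
      exact_mod_cast (by omega : 1 ≤ n)
    refine ⟨-1 + 1 / (n : ℝ), ⟨by linarith, by linarith⟩, ?_⟩
    set F : ℕ := m.factorial * (n - m).factorial with hF
    set Q : ℕ := ∏ k ∈ (Finset.Ico 1 (n + 1)).erase m, (2 * k - 1) with hQ
    have hmcast : ((mF : ℕ) : ℝ) = (m : ℝ) := by rw [hmF]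
    -- value at the retained node
    have hA : |p.eval (xj mF)| = (2 / (n : ℝ)) ^ n * (F : ℝ) := by
      calc |p.eval (xj mF)| = ∏ k ∈ Finset.univ.erase mF, |xj mF - xj k| := habs _
        _ = ∏ k ∈ Finset.univ.erase mF, (2 / (n : ℝ)) * |(m : ℝ) - ((k : ℕ) : ℝ)| := by
            refine Finset.prod_congr rfl fun k _ => ?_
            rw [hxj' mF, hxj' k, hmcast]
            have he : (-1 + 2 * (m : ℝ) / n) - (-1 + 2 * ((k : ℕ) : ℝ) / n)
                = (2 / (n : ℝ)) * ((m : ℝ) - ((k : ℕ) : ℝ)) := by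
              field_simp <;> ring
            rw [he, abs_mul, abs_of_pos (by positivity : (0 : ℝ) < 2 / (n : ℝ))]
        _ = (2 / (n : ℝ)) ^ n * ∏ k ∈ Finset.univ.erase mF, |(m : ℝ) - ((k : ℕ) : ℝ)| := by
            rw [Finset.prod_mul_distrib, Finset.prod_const, hcard]
        _ = (2 / (n : ℝ)) ^ n * ∏ k ∈ (Finset.range (n + 1)).erase m, |(m : ℝ) - (k : ℝ)| := by
            rw [eqnodes_fin_erase_prod (n + 1) mF (fun t => |(m : ℝ) - (t : ℝ)|)]
        _ = (2 / (n : ℝ)) ^ n * (F : ℝ) := by rw [eqnodes_distprod n m hmn, hF]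
    -- value at the midpoint of the first interval
    have hB : |p.eval (-1 + 1 / (n : ℝ))| = (1 / (n : ℝ)) ^ n * (Q : ℝ) := by
      calc |p.eval (-1 + 1 / (n : ℝ))|
          = ∏ k ∈ Finset.univ.erase mF, |(-1 + 1 / (n : ℝ)) - xj k| := habs _
        _ = ∏ k ∈ Finset.univ.erase mF, (1 / (n : ℝ)) * |2 * ((k : ℕ) : ℝ) - 1| := by
            refine Finset.prod_congr rfl fun k _ => ?_
            rw [hxj' k]
            have he : (-1 + 1 / (n : ℝ)) - (-1 + 2 * ((k : ℕ) : ℝ) / n)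
                = (1 / (n : ℝ)) * (1 - 2 * ((k : ℕ) : ℝ)) := by
              field_simp <;> ring
            rw [he, abs_mul, abs_of_pos hinv_pos]
            congr 1
            exact abs_sub_comm _ _
        _ = (1 / (n : ℝ)) ^ n * ∏ k ∈ Finset.univ.erase mF, |2 * ((k : ℕ) : ℝ) - 1| := by
            rw [Finset.prod_mul_distrib, Finset.prod_const, hcard]
        _ = (1 / (n : ℝ)) ^ n * ∏ k ∈ (Finset.range (n + 1)).erase m, |2 * (k : ℝ) - 1| := by
            rw [eqnodes_fin_erase_prod (n + 1) mF (fun t => |2 * (t : ℝ) - 1|)]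
        _ = (1 / (n : ℝ)) ^ n * (Q : ℝ) := by
            have hsplit : (Finset.range (n + 1)).erase m
                = insert 0 ((Finset.Ico 1 (n + 1)).erase m) := by
              ext k
              simp only [Finset.mem_erase, Finset.mem_range, Finset.mem_insert, Finset.mem_Ico]
              omega
            have h0 : (0 : ℕ) ∉ (Finset.Ico 1 (n + 1)).erase m := by
              simp
            rw [hsplit, Finset.prod_insert h0]
            have hone : |2 * ((0 : ℕ) : ℝ) - 1| = 1 := by norm_num
            rw [hone, one_mul, hQ, Nat.cast_prod]
            refine congrArg _ (Finset.prod_congr rfl fun k hk => ?_)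
            rw [Finset.mem_erase, Finset.mem_Ico] at hk
            have hk1 : 1 ≤ k := hk.2.1
            have hsub : ((2 * k - 1 : ℕ) : ℝ) = 2 * (k : ℝ) - 1 := by
              have : 1 ≤ 2 * k := by omega
              push_cast [Nat.cast_sub this]
              ring
            rw [hsub, abs_of_nonneg]
            have : (1 : ℝ) ≤ (k : ℝ) := by exact_mod_cast hk1
            linarith
    -- the key numeric inequality
    set D : ℕ := (2 * m - 1) * (2 ^ n * n.factorial) with hD
    have hDpos : (0 : ℝ) < (D : ℝ) := by
      have : 0 < D := by
        rw [hD]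
        exact Nat.mul_pos (by omega) (Nat.mul_pos (Nat.pow_pos (by omega)) n.factorial_pos)
      exact_mod_cast this
    have hQD : Q * D = (2 * n).factorial := by
      have hmem : m ∈ Finset.Ico 1 (n + 1) := by
        rw [Finset.mem_Ico]; omega
      have h1 : (2 * m - 1) * Q = ∏ k ∈ Finset.Ico 1 (n + 1), (2 * k - 1) := by
        rw [hQ]
        exact Finset.mul_prod_erase (Finset.Ico 1 (n + 1)) (fun k => 2 * k - 1) hmem
      calc Q * D = ((2 * m - 1) * Q) * (2 ^ n * n.factorial) := by rw [hD]; ring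
        _ = (∏ k ∈ Finset.Ico 1 (n + 1), (2 * k - 1)) * (2 ^ n * n.factorial) := by rw [h1]
        _ = (2 * n).factorial := eqnodes_oddprod n
    have hnat : 6 ^ (n + 1) * (2 ^ n * F) * D ≤ 5 ^ (n + 1) * (Q * D) := by
      rw [hQD, hF, hD]
      exact eqnodes_keyineq n m hn hm (eqnodes_aux_pow n hn)
    have hreal : (6 : ℝ) ^ (n + 1) * (2 ^ n * (F : ℝ)) * (D : ℝ)
        ≤ 5 ^ (n + 1) * ((Q : ℝ) * (D : ℝ)) := by
      exact_mod_cast hnat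
    have h2 : (6 : ℝ) ^ (n + 1) * (2 ^ n * (F : ℝ)) ≤ 5 ^ (n + 1) * (Q : ℝ) := by
      have h3 : (5 : ℝ) ^ (n + 1) * ((Q : ℝ) * (D : ℝ)) = (5 ^ (n + 1) * (Q : ℝ)) * (D : ℝ) := by
        ring
      rw [h3] at hreal
      exact le_of_mul_le_mul_right hreal hDpos
    have hgoal : (6 / 5 : ℝ) ^ (n + 1) * ((2 / (n : ℝ)) ^ n * (F : ℝ))
        ≤ (1 / (n : ℝ)) ^ n * (Q : ℝ) := by
      have e1 : (6 / 5 : ℝ) ^ (n + 1) * ((2 / (n : ℝ)) ^ n * (F : ℝ))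
          = (6 ^ (n + 1) * (2 ^ n * (F : ℝ))) / (5 ^ (n + 1) * (n : ℝ) ^ n) := by
        rw [div_pow, div_pow]
        field_simp <;> ring
      have e2 : (1 / (n : ℝ)) ^ n * (Q : ℝ)
          = (5 ^ (n + 1) * (Q : ℝ)) / (5 ^ (n + 1) * (n : ℝ) ^ n) := by
        rw [div_pow, one_pow]
        field_simp <;> ring
      have hden : (0 : ℝ) < 5 ^ (n + 1) * (n : ℝ) ^ n := by positivity
      rw [e1, e2]
      exact (div_le_div_iff_of_pos_right hden).2 h2
    refine le_trans (le_of_eq ?_) (le_of_le_of_eq hgoal hB.symm)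
    rw [← hA]
    exact congrArg _ (hSval _)
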